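/- Double robustness of the full-data augmented estimating functional: for arbitrary functions Q̃ : W-values → ℝ and g̃ : W-values → (0,1], define Ψ(Q̃, g̃) = E[ (1{A=a}/g̃(W)) · (g_T(W)/g_T) · (S − Q̃(W)) ] + E[ (1{T ∈ T_ref}/g_T) · Q̃(W) ]. Then Ψ(Q̃, g̃) = ψ := E[ E[S | A=a, W] | T ∈ T_ref ] whenever either Q̃(w) = E[S | A = a, W = w] for all w in the support of W, or g̃(w) = P(A = a | W = w) for all w in the support of W. -/
import Mathlib


open Finset Real
open scoped Classical BigOperators

noncomputable section

/-- Probability of an event on a finite space with pmf `p`. -/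
def pr {Ω : Type*} [Fintype Ω] (p : Ω → ℝ) (E : Ω → Prop) : ℝ :=
  ∑ ω, if E ω then p ω else 0

/-- Expectation of `f` under pmf `p`. -/
def ex {Ω : Type*} [Fintype Ω] (p : Ω → ℝ) (f : Ω → ℝ) : ℝ :=
  ∑ ω, p ω * f ω

/-- Conditional expectation of `f` given the event `E`. -/
def cex {Ω : Type*} [Fintype Ω] (p : Ω → ℝ) (f : Ω → ℝ) (E : Ω → Prop) : ℝ :=
  (∑ ω, if E ω then p ω * f ω else 0) / pr p E

/-- Conditional probability of `E` given `F`. -/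
def cpr {Ω : Type*} [Fintype Ω] (p : Ω → ℝ) (E F : Ω → Prop) : ℝ :=
  pr p (fun ω => E ω ∧ F ω) / pr p F

/-- `p` is a probability mass function. -/
structure IsPMF {Ω : Type*} [Fintype Ω] (p : Ω → ℝ) : Prop where
  nonneg : ∀ ω, 0 ≤ p ω
  sum_one : ∑ ω, p ω = 1

/-- Conditional independence of `X` and `Y` given `Z` on a finite space. -/
def CondIndepFun {Ω : Type*} [Fintype Ω] {α β γ : Type*}
    (p : Ω → ℝ) (X : Ω → α) (Y : Ω → β) (Z : Ω → γ) : Prop :=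
  ∀ x y z, 0 < pr p (fun ω => Z ω = z) →
    cpr p (fun ω => X ω = x ∧ Y ω = y) (fun ω => Z ω = z) =
      cpr p (fun ω => X ω = x) (fun ω => Z ω = z) *
      cpr p (fun ω => Y ω = y) (fun ω => Z ω = z)

private lemma pr_nonneg' {Ω : Type*} [Fintype Ω] {p : Ω → ℝ} (hp : IsPMF p) (E : Ω → Prop) :
    0 ≤ pr p E :=
  Finset.sum_nonneg fun ω _ => by split_ifs; exacts [hp.nonneg ω, le_rfl]

private lemma pr_eq_zero_imp' {Ω : Type*} [Fintype Ω] {p : Ω → ℝ} (hp : IsPMF p) {E : Ω → Prop}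
    (h : pr p E = 0) : ∀ ω, E ω → p ω = 0 := by
  intro ω hω
  have h0 := (Finset.sum_eq_zero_iff_of_nonneg
    (fun x (_ : x ∈ Finset.univ) => by
      split_ifs; exacts [hp.nonneg x, le_rfl])).mp h ω (Finset.mem_univ ω)
  simpa [hω] using h0

private lemma fiber_sum_eq' {Ω 𝕎 : Type*} [Fintype Ω] (W : Ω → 𝕎) (w : 𝕎)
    (E : Ω → Prop) (f : Ω → ℝ) :
    ∑ ω ∈ Finset.univ.filter (fun ω => W ω = w), (if E ω then f ω else 0) =
      ∑ ω, if E ω ∧ W ω = w then f ω else 0 := by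
  rw [Finset.sum_filter]
  exact Finset.sum_congr rfl fun ω _ => by
    by_cases h1 : E ω <;> by_cases h2 : W ω = w <;> simp [h1, h2]

theorem double_robustness
    {Ω 𝕋 𝔸 𝕎 : Type*} [Fintype Ω]
    (p : Ω → ℝ) (hp : IsPMF p)
    (T : Ω → 𝕋) (A : Ω → 𝔸) (W : Ω → 𝕎) (S : Ω → ℝ)
    (a : 𝔸) (Tref : 𝕋 → Prop)
    (gTW : 𝕎 → ℝ) (gT : ℝ)
    (hgTW : ∀ w, gTW w = cpr p (fun ω => Tref (T ω)) (fun ω => W ω = w))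
    (hgT : gT = pr p (fun ω => Tref (T ω)))
    (hgTpos : 0 < gT)
    (hgApos : ∀ w, 0 < pr p (fun ω => W ω = w) →
      0 < cpr p (fun ω => A ω = a) (fun ω => W ω = w))
    (Qt gt : 𝕎 → ℝ)
    (hgt : ∀ w, 0 < gt w ∧ gt w ≤ 1)
    (hrob :
      (∀ w, 0 < pr p (fun ω => W ω = w) →
        Qt w = cex p S (fun ω => A ω = a ∧ W ω = w)) ∨
      (∀ w, 0 < pr p (fun ω => W ω = w) →
        gt w = cpr p (fun ω => A ω = a) (fun ω => W ω = w))) :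
    ex p (fun ω =>
        (if A ω = a then (1 : ℝ) else 0) / gt (W ω) * (gTW (W ω) / gT) *
          (S ω - Qt (W ω))) +
      ex p (fun ω => (if Tref (T ω) then (1 : ℝ) else 0) / gT * Qt (W ω)) =
      cex p (fun ω => cex p S (fun ω' => A ω' = a ∧ W ω' = W ω))
        (fun ω => Tref (T ω)) := by
  classical
  have hfib : ∀ F : Ω → ℝ, ∑ ω, F ω =
      ∑ w ∈ Finset.univ.image W, ∑ ω ∈ Finset.univ.filter (fun ω => W ω = w), F ω :=
    fun F => (Finset.sum_fiberwise_of_maps_to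
      (fun ω _ => Finset.mem_image_of_mem W (Finset.mem_univ ω)) F).symm
  simp only [ex]
  rw [cex, ← hgT]
  rw [Finset.sum_div, ← Finset.sum_add_distrib, hfib, hfib]
  refine Finset.sum_congr rfl fun w hw => ?_
  set N := ∑ ω, if A ω = a ∧ W ω = w then p ω * S ω else 0 with hNdef
  set D := pr p (fun ω => A ω = a ∧ W ω = w) with hDdef
  set Tp := pr p (fun ω => Tref (T ω) ∧ W ω = w) with hTdef
  set P := pr p (fun ω => W ω = w) with hPdef
  clear_value N D Tp P
  have hN : N = ∑ ω ∈ Finset.univ.filter (fun ω => W ω = w),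
      (if A ω = a then p ω * S ω else 0) := by
    rw [hNdef, Finset.sum_filter]
    exact Finset.sum_congr rfl fun ω _ => by
      by_cases h1 : A ω = a <;> by_cases h2 : W ω = w <;> simp [h1, h2]
  have hD : D = ∑ ω ∈ Finset.univ.filter (fun ω => W ω = w),
      (if A ω = a then p ω else 0) := by
    rw [hDdef, pr, Finset.sum_filter]
    exact Finset.sum_congr rfl fun ω _ => by
      by_cases h1 : A ω = a <;> by_cases h2 : W ω = w <;> simp [h1, h2]
  have hT : Tp = ∑ ω ∈ Finset.univ.filter (fun ω => W ω = w),
      (if Tref (T ω) then p ω else 0) := by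
    rw [hTdef, pr, Finset.sum_filter]
    exact Finset.sum_congr rfl fun ω _ => by
      by_cases h1 : Tref (T ω) <;> by_cases h2 : W ω = w <;> simp [h1, h2]
  have hL : (∑ ω ∈ Finset.univ.filter (fun ω => W ω = w),
        (p ω * ((if A ω = a then (1 : ℝ) else 0) / gt (W ω) * (gTW (W ω) / gT) *
            (S ω - Qt (W ω))) +
          p ω * ((if Tref (T ω) then (1 : ℝ) else 0) / gT * Qt (W ω)))) =
      gTW w / (gt w * gT) * N - gTW w / (gt w * gT) * Qt w * D + Qt w / gT * Tp := by
    rw [hN, hD, hT, Finset.mul_sum, Finset.mul_sum, Finset.mul_sum,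
      ← Finset.sum_sub_distrib, ← Finset.sum_add_distrib]
    refine Finset.sum_congr rfl fun ω hω => ?_
    rw [(Finset.mem_filter.mp hω).2]
    split_ifs <;> ring
  have hq' : cex p S (fun ω' => A ω' = a ∧ W ω' = w) = N / D := by
    rw [cex, ← hDdef]
    congr 1
    rw [hNdef]
    exact Finset.sum_congr rfl fun ω _ => by congr
  have hR : (∑ ω ∈ Finset.univ.filter (fun ω => W ω = w),
        (if Tref (T ω) then p ω *
            cex p S (fun ω' => A ω' = a ∧ W ω' = W ω) else 0) / gT) =
      N / D / gT * Tp := by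
    rw [hT, Finset.mul_sum]
    refine Finset.sum_congr rfl fun ω hω => ?_
    rw [(Finset.mem_filter.mp hω).2, hq']
    split_ifs <;> ring
  rw [hL, hR]
  by_cases hP0 : P = 0
  · have hp0 : ∀ ω, W ω = w → p ω = 0 := by
      intro ω hω
      exact pr_eq_zero_imp' hp (hPdef ▸ hP0) ω hω
    have hN0 : N = 0 := by
      rw [hNdef]
      exact Finset.sum_eq_zero fun ω _ => by
        split_ifs with h
        · rw [hp0 ω h.2]; ring
        · rfl
    have hD0 : D = 0 := by
      rw [hD]
      exact Finset.sum_eq_zero fun ω hω => by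
        split_ifs with h
        · exact hp0 ω (Finset.mem_filter.mp hω).2
        · rfl
    have hT0 : Tp = 0 := by
      rw [hT]
      exact Finset.sum_eq_zero fun ω hω => by
        split_ifs with h
        · exact hp0 ω (Finset.mem_filter.mp hω).2
        · rfl
    rw [hN0, hD0, hT0]
    simp
  · have hPpos : 0 < P :=
      lt_of_le_of_ne (hPdef ▸ pr_nonneg' hp _) (Ne.symm hP0)
    have hcpr : 0 < D / P := by
      have h := hgApos w (hPdef ▸ hPpos)
      rw [cpr, ← hDdef, ← hPdef] at h
      exact h
    have hDpos : 0 < D := by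
      rcases div_pos_iff.mp hcpr with ⟨h1, _⟩ | ⟨_, h2⟩
      · exact h1
      · linarith
    rcases hrob with hQ | hg
    · have hq : Qt w = N / D := (hQ w (hPdef ▸ hPpos)).trans hq'
      rw [hq]
      have hD' := ne_of_gt hDpos
      have hgT' := ne_of_gt hgTpos
      have hgt' := ne_of_gt (hgt w).1
      field_simp
      ring
    · have hgv : gt w = D / P := by
        rw [hg w (hPdef ▸ hPpos), cpr, ← hDdef, ← hPdef]
      have hgTWv : gTW w = Tp / P := by
        rw [hgTW w, cpr, ← hTdef, ← hPdef]
      rw [hgv, hgTWv]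
      have hP' := ne_of_gt hPpos
      have hD' := ne_of_gt hDpos
      have hgT' := ne_of_gt hgTpos
      field_simp
      ring
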